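/- Define T(n, m) = (n² + nm + m², m² + 2nm, n² + 2nm)ᵗ. Then for every pair of integers (n, m), if (n', m')ᵗ = A₁ · (n, m)ᵗ where A₁ = [[1,0],[3,1]], then T(n', m') = M₁ · T(n, m), where M₁ = [[7,−6,6],[8,−7,7],[4,−4,3]]. Explicitly, T(n, 3n+m) = (13n² + 7nm + m², 15n² + 8nm + m², 7n² + 2nm)ᵗ = M₁ · T(n, m). -/
import Mathlib


open Matrix

/-- `T(n, m) = (n² + nm + m², m² + 2nm, n² + 2nm)ᵗ`. -/
def T (n m : ℤ) : Fin 3 → ℤ :=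
  ![n ^ 2 + n * m + m ^ 2, m ^ 2 + 2 * n * m, n ^ 2 + 2 * n * m]

/-- The matrix `A₁`. -/
def A1 : Matrix (Fin 2) (Fin 2) ℤ := !![1, 0; 3, 1]

/-- The matrix `M₁`. -/
def M1 : Matrix (Fin 3) (Fin 3) ℤ := !![7, -6, 6; 8, -7, 7; 4, -4, 3]

lemma key (n m : ℤ) : T n (3 * n + m) = M1.mulVec (T n m) := by
  funext i
  fin_cases i <;>
    simp [T, M1, mulVec, dotProduct, Fin.sum_univ_succ] <;> ring

/-- for every `(n, m)`, if `(n', m')ᵗ = A₁ · (n, m)ᵗ` then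
`T(n', m') = M₁ · T(n, m)`; explicitly `T(n, 3n + m) =
(13n² + 7nm + m², 15n² + 8nm + m², 7n² + 2nm)ᵗ = M₁ · T(n, m)`. -/
theorem T_A1_eq_M1_T :
    (∀ n m n' m' : ℤ, A1.mulVec ![n, m] = ![n', m'] →
      T n' m' = M1.mulVec (T n m)) ∧
    (∀ n m : ℤ,
      T n (3 * n + m) =
        ![13 * n ^ 2 + 7 * n * m + m ^ 2, 15 * n ^ 2 + 8 * n * m + m ^ 2,
          7 * n ^ 2 + 2 * n * m] ∧
      T n (3 * n + m) = M1.mulVec (T n m)) := by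
  constructor
  · intro n m n' m' h
    have h0 := congrFun h 0
    have h1 := congrFun h 1
    simp [A1, mulVec, dotProduct, Fin.sum_univ_succ] at h0 h1
    subst h0
    rw [show m' = 3 * n + m by linarith]
    exact key n m
  · intro n m
    refine ⟨?_, key n m⟩
    funext i
    fin_cases i <;> simp [T] <;> ring
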